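/- arXiv:1906.01356 — 2 statements merged into one kernel-verified Lean document; each statement's English description precedes it below -/
import Mathlib

section
/- Let α ∈ (0,1) and define f(λ) = λ(1 − λ)/(1 − αλ) for λ ∈ [0,1). Then λ* := (1 − √(1 − α))/α equals 1/(1 + √(1 − α)), lies in (0,1), and is the maximizer of f over [0,1): for all λ ∈ [0,1), f(λ) ≤ f(λ*). -/
/-- For `α ∈ (0,1)`, the arrival rate `λ* = (1 − √(1 − α))/α` equals
`1/(1 + √(1 − α))`, lies in `(0,1)`, and maximizes the M/GI/1 erasure
queue-channel capacity `f(λ) = λ(1 − λ)/(1 − αλ)` over `[0,1)`. -/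
theorem mg1_capacity_maximizer (α : ℝ) (hα : α ∈ Set.Ioo (0 : ℝ) 1) :
    (1 - Real.sqrt (1 - α)) / α = 1 / (1 + Real.sqrt (1 - α)) ∧
    (1 - Real.sqrt (1 - α)) / α ∈ Set.Ioo (0 : ℝ) 1 ∧
    ∀ lam ∈ Set.Ico (0 : ℝ) 1,
      lam * (1 - lam) / (1 - α * lam) ≤
        ((1 - Real.sqrt (1 - α)) / α) * (1 - (1 - Real.sqrt (1 - α)) / α) /
          (1 - α * ((1 - Real.sqrt (1 - α)) / α)) := by
  obtain ⟨hα0, hα1⟩ := hα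
  set s := Real.sqrt (1 - α) with hs
  have hs2 : s ^ 2 = 1 - α := Real.sq_sqrt (by linarith)
  have hs0 : 0 < s := Real.sqrt_pos.mpr (by linarith)
  have hs1 : s < 1 := by nlinarith [hs2]
  have h1s : 0 < 1 + s := by linarith
  have heq : (1 - s) / α = 1 / (1 + s) := by
    rw [div_eq_div_iff (by linarith) (by linarith : (1:ℝ)+s ≠ 0)]
    nlinarith [hs2]
  have hmem : (1 - s) / α ∈ Set.Ioo (0 : ℝ) 1 := by
    rw [heq]
    constructor
    · positivity
    · rw [div_lt_one h1s]; linarith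
  refine ⟨heq, hmem, fun lam ⟨hl0, hl1⟩ => ?_⟩
  have hrhs : ((1 - s) / α) * (1 - (1 - s) / α) / (1 - α * ((1 - s) / α)) =
      1 / (1 + s) ^ 2 := by
    rw [heq]
    have hden : 1 - α * (1 / (1 + s)) = s := by
      field_simp
      nlinarith [hs2]
    rw [hden]
    field_simp
    ring
  rw [hrhs]
  have hdl : 0 < 1 - α * lam := by nlinarith
  rw [div_le_div_iff₀ hdl (by positivity)]
  nlinarith [sq_nonneg ((1 + s) * lam - 1), hs2]
end

section
/- Let μ be a probability measure on [0,∞) with mean 1 (the law of a unit-mean service time S with F_S(0) = 0), and let κ > 0. Then the Laplace transform satisfies 𝔼_μ[e^{−κS}] ≥ e^{−κ}, with the deterministic service time S ≡ 1 achieving equality. Consequently, for every arrival rate λ ∈ (0,1), the M/GI/1 erasure queue-channel capacity satisfies λ(1 − λ)κ/(κ − λ(1 − 𝔼_μ[e^{−κS}])) ≤ λ(1 − λ)κ/(κ − λ(1 − e^{−κ})); that is, among all service distributions with unit mean, the deterministic service time maximizes the capacity. -/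
open MeasureTheory

/-- For a unit-mean service time distribution `μ` on `[0,∞)` and decoherence rate `κ > 0`,
the Laplace transform satisfies `𝔼_μ[e^{−κS}] ≥ e^{−κ}`, with equality for the
deterministic unit service time (the Dirac measure at `1`). Consequently, for every
arrival rate `λ ∈ (0,1)`, the M/GI/1 erasure queue-channel capacity
`λ(1−λ)κ/(κ − λ(1 − 𝔼_μ[e^{−κS}]))` is at most the capacity with deterministic service,
`λ(1−λ)κ/(κ − λ(1 − e^{−κ}))`. -/
theorem deterministic_service_maximizes_capacity
    (μ : Measure ℝ) [IsProbabilityMeasure μ]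
    (hsupp : ∀ᵐ x ∂μ, 0 ≤ x)
    (hmean : (∫ x, x ∂μ) = 1) (hint : Integrable (fun x => x) μ)
    (κ : ℝ) (hκ : 0 < κ) :
    (∫ x, Real.exp (-κ * x) ∂μ) ≥ Real.exp (-κ) ∧
    (∫ x, Real.exp (-κ * x) ∂(Measure.dirac (1 : ℝ))) = Real.exp (-κ) ∧
    ∀ lam ∈ Set.Ioo (0 : ℝ) 1,
      lam * (1 - lam) * κ / (κ - lam * (1 - ∫ x, Real.exp (-κ * x) ∂μ)) ≤
        lam * (1 - lam) * κ / (κ - lam * (1 - Real.exp (-κ))) := by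
  have hexpInt : Integrable (fun x => Real.exp (-κ * x)) μ := by
    apply Integrable.mono' (integrable_const 1)
      (Continuous.aestronglyMeasurable (by continuity))
    filter_upwards [hsupp] with x hx
    rw [Real.norm_eq_abs, abs_of_pos (Real.exp_pos _)]
    exact Real.exp_le_one_iff.mpr (by nlinarith)
  -- Jensen via the tangent line at 1
  have hlinInt : Integrable (fun x => Real.exp (-κ) * (1 + κ * (1 - x))) μ := by
    have : Integrable (fun x : ℝ => Real.exp (-κ) * (1 + κ) - Real.exp (-κ) * κ * x) μ :=
      (integrable_const _).sub (hint.const_mul _)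
    exact this.congr (by filter_upwards with x; ring)
  have hL : Real.exp (-κ) ≤ ∫ x, Real.exp (-κ * x) ∂μ := by
    have hmono : (∫ x, Real.exp (-κ) * (1 + κ * (1 - x)) ∂μ) ≤
        ∫ x, Real.exp (-κ * x) ∂μ := by
      apply integral_mono hlinInt hexpInt
      intro x
      have h1 : κ * (1 - x) + 1 ≤ Real.exp (κ * (1 - x)) := Real.add_one_le_exp _
      have h2 : Real.exp (-κ * x) = Real.exp (-κ) * Real.exp (κ * (1 - x)) := by
        rw [← Real.exp_add]; ring_nf
      simp only []
      rw [h2]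
      nlinarith [Real.exp_pos (-κ)]
    have hcalc : (∫ x, Real.exp (-κ) * (1 + κ * (1 - x)) ∂μ) = Real.exp (-κ) := by
      have : (fun x : ℝ => Real.exp (-κ) * (1 + κ * (1 - x))) =
          fun x : ℝ => Real.exp (-κ) * (1 + κ) - Real.exp (-κ) * κ * x := by
        funext x; ring
      rw [this, integral_sub (integrable_const _) (hint.const_mul _), integral_const]
      have h3 : ∫ a, Real.exp (-κ) * κ * a ∂μ = Real.exp (-κ) * κ := by
        rw [integral_const_mul, hmean, mul_one]
      rw [h3]
      simp [measure_univ]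
      ring
    linarith
  have hdirac : (∫ x, Real.exp (-κ * x) ∂(Measure.dirac (1 : ℝ))) = Real.exp (-κ) := by
    rw [integral_dirac]
    norm_num
  refine ⟨hL, hdirac, ?_⟩
  intro lam ⟨hl0, hl1⟩
  have hκ' : 1 - κ < Real.exp (-κ) := by
    have := Real.add_one_lt_exp (x := -κ) (by linarith)
    linarith
  have hexple1 : Real.exp (-κ) ≤ 1 := Real.exp_le_one_iff.mpr (by linarith)
  have hDd : 0 < κ - lam * (1 - Real.exp (-κ)) := by nlinarith
  have hDμ : κ - lam * (1 - Real.exp (-κ)) ≤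
      κ - lam * (1 - ∫ x, Real.exp (-κ * x) ∂μ) := by nlinarith
  have hnum : 0 ≤ lam * (1 - lam) * κ := le_of_lt (mul_pos (mul_pos hl0 (by linarith)) hκ)
  exact div_le_div_of_nonneg_left hnum hDd hDμ
end
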